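/- Suppose h : ℝ → ℝ is differentiable on an open set containing the interior Δ° of the simplex (applied to partial sums of coordinates). Then the Jacobian matrix of the lifted map L(h) : ℝ^{k−1} → ℝ^{k−1} at any θ ∈ Δ° is lower triangular, with l-th diagonal entry equal to h'(θ₁+⋯+θ_l). In particular, det J(L(h))(θ) = ∏_{l=1}^{k−1} h'(θ₁+⋯+θ_l). -/

import Mathlib

/-- The lifting operator `L`. -/
noncomputable def lift (n : ℕ) (h : ℝ → ℝ) (θ : Fin n → ℝ) : Fin n → ℝ :=
  fun l => h (∑ i ∈ Finset.Iic l, θ i) -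
    (if l.1 = 0 then 0 else h (∑ i ∈ Finset.Iio l, θ i))

/-- The simplex `Δ`. -/
def stdSimplex' (n : ℕ) : Set (Fin n → ℝ) :=
  {θ | (∀ l, θ l ∈ Set.Icc (0:ℝ) 1) ∧ ∑ l, θ l ≤ 1}

/-- The Jacobian matrix of the lifted map `L(h)` at `θ`:
entry `(l, m)` equals `h'(θ₁+⋯+θ_{l+1})·1{m ≤ l} − h'(θ₁+⋯+θ_l)·1{m < l}`. -/
noncomputable def liftJac (n : ℕ) (h' : ℝ → ℝ) (θ : Fin n → ℝ) :
    Matrix (Fin n) (Fin n) ℝ :=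
  fun l m => (if m ≤ l then h' (∑ i ∈ Finset.Iic l, θ i) else 0)
           - (if m < l then h' (∑ i ∈ Finset.Iio l, θ i) else 0)

lemma interior_facts {n : ℕ} {θ : Fin n → ℝ}
    (hθ : θ ∈ interior ({θ : Fin n → ℝ | (∀ l, θ l ∈ Set.Icc (0:ℝ) 1) ∧ ∑ l, θ l ≤ 1})) :
    (∀ l, 0 < θ l) ∧ (∑ l, θ l < 1) := by
  obtain ⟨ε, hε, hball⟩ := Metric.mem_nhds_iff.mp (mem_interior_iff_mem_nhds.mp hθ)
  have key : ∀ (l : Fin n) (c : ℝ), |c| < ε →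
      Function.update θ l (θ l + c) ∈
        {θ : Fin n → ℝ | (∀ l, θ l ∈ Set.Icc (0:ℝ) 1) ∧ ∑ l, θ l ≤ 1} := by
    intro l c hc
    apply hball
    rw [Metric.mem_ball, dist_pi_lt_iff hε]
    intro i
    rcases eq_or_ne i l with rfl | hi
    · simpa [Real.dist_eq] using hc
    · simpa [Function.update_of_ne hi, Real.dist_eq] using hε
  constructor
  · intro l
    have h1 := ((key l (-(ε/2)) (by rw [abs_neg, abs_of_pos (by linarith)]; linarith)).1 l).1
    rw [Function.update_self] at h1
    linarith
  · rcases Nat.eq_zero_or_pos n with rfl | hn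
    · simpa using one_pos
    · have l : Fin n := ⟨0, hn⟩
      have h1 := (key l (ε/2) (by rw [abs_of_pos (by linarith)]; linarith)).2
      rw [Finset.sum_update_of_mem (Finset.mem_univ l), ← Finset.erase_eq] at h1
      have h2 : ∑ i, θ i = θ l + ∑ i ∈ Finset.univ.erase l, θ i :=
        (Finset.add_sum_erase _ _ (Finset.mem_univ l)).symm
      linarith

lemma sum_hasFDerivAt {n : ℕ} (s : Finset (Fin n)) (θ : Fin n → ℝ) :
    HasFDerivAt (fun θ : Fin n → ℝ => ∑ i ∈ s, θ i)
      (∑ i ∈ s, ContinuousLinearMap.proj (R := ℝ) (φ := fun _ : Fin n => ℝ) i) θ :=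
  HasFDerivAt.fun_sum fun i _ => hasFDerivAt_apply i θ

lemma main_deriv {n : ℕ} (h h' : ℝ → ℝ)
    (hd : ∀ u ∈ Set.Ioo (0:ℝ) 1, HasDerivAt h (h' u) u)
    (θ : Fin n → ℝ)
    (hIic : ∀ l : Fin n, (∑ i ∈ Finset.Iic l, θ i) ∈ Set.Ioo (0:ℝ) 1)
    (hIio : ∀ l : Fin n, l.1 ≠ 0 → (∑ i ∈ Finset.Iio l, θ i) ∈ Set.Ioo (0:ℝ) 1) :
    HasFDerivAt (lift n h)
      (LinearMap.toContinuousLinearMap (Matrix.mulVecLin (liftJac n h' θ))) θ := by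
  apply hasFDerivAt_pi''
  intro l
  have key : ∀ v : Fin n → ℝ,
      ((ContinuousLinearMap.proj l).comp
        (LinearMap.toContinuousLinearMap (Matrix.mulVecLin (liftJac n h' θ)))) v
      = h' (∑ i ∈ Finset.Iic l, θ i) * (∑ i ∈ Finset.Iic l, v i)
        - (if l.1 = 0 then 0 else
            h' (∑ i ∈ Finset.Iio l, θ i) * (∑ i ∈ Finset.Iio l, v i)) := by
    intro v
    simp only [ContinuousLinearMap.comp_apply, ContinuousLinearMap.proj_apply,
      LinearMap.coe_toContinuousLinearMap', Matrix.mulVecLin_apply, Matrix.mulVec,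
      dotProduct, liftJac, sub_mul, ite_mul, zero_mul,
      Finset.sum_sub_distrib]
    congr 1
    · rw [Finset.mul_sum,
        show Finset.Iic l = Finset.univ.filter (· ≤ l) from by ext m; simp]
      exact (Finset.sum_filter _ _).symm
    · rcases eq_or_ne l.1 0 with h0 | h0
      · have : Finset.Iio l = ∅ := by
          ext m; simp [Finset.mem_Iio, Fin.lt_def, h0, Nat.not_lt_zero]
        rw [if_pos h0]
        refine Finset.sum_eq_zero fun m _ => ?_
        rw [if_neg]
        simp only [Fin.lt_def, h0]
        exact Nat.not_lt_zero _
      · rw [if_neg h0, Finset.mul_sum,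
          show Finset.Iio l = Finset.univ.filter (· < l) from by ext m; simp]
        exact (Finset.sum_filter _ _).symm
  have hmain : HasFDerivAt (fun θ : Fin n → ℝ => lift n h θ l)
      (((ContinuousLinearMap.proj l).comp
        (LinearMap.toContinuousLinearMap (Matrix.mulVecLin (liftJac n h' θ))))) θ := by
    rcases eq_or_ne l.1 0 with h0 | h0
    · have hIio0 : Finset.Iio l = ∅ := by
        ext m; simp [Finset.mem_Iio, Fin.lt_def, h0, Nat.not_lt_zero]
      have h1 : HasFDerivAt (fun θ : Fin n → ℝ => h (∑ i ∈ Finset.Iic l, θ i))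
          (h' (∑ i ∈ Finset.Iic l, θ i) •
            ∑ i ∈ Finset.Iic l, ContinuousLinearMap.proj i) θ :=
        HasDerivAt.comp_hasFDerivAt θ (hd _ (hIic l)) (sum_hasFDerivAt _ θ)
      have h2 := h1.sub_const 0
      apply h2.congr_fderiv ?_ |>.congr_of_eventuallyEq ?_
      · ext v
        rw [key v, if_pos h0]
        simp [Finset.mul_sum]
      · filter_upwards with θ'
        simp [lift, h0]
    · have h1 : HasFDerivAt (fun θ : Fin n → ℝ => h (∑ i ∈ Finset.Iic l, θ i))
          (h' (∑ i ∈ Finset.Iic l, θ i) •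
            ∑ i ∈ Finset.Iic l, ContinuousLinearMap.proj i) θ :=
        HasDerivAt.comp_hasFDerivAt θ (hd _ (hIic l)) (sum_hasFDerivAt _ θ)
      have h2 : HasFDerivAt (fun θ : Fin n → ℝ => h (∑ i ∈ Finset.Iio l, θ i))
          (h' (∑ i ∈ Finset.Iio l, θ i) •
            ∑ i ∈ Finset.Iio l, ContinuousLinearMap.proj i) θ :=
        HasDerivAt.comp_hasFDerivAt θ (hd _ (hIio l h0)) (sum_hasFDerivAt _ θ)
      have h3 := h1.sub h2
      apply h3.congr_fderiv ?_ |>.congr_of_eventuallyEq ?_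
      · ext v
        rw [key v, if_neg h0]
        simp [Finset.mul_sum]
      · filter_upwards with θ'
        simp [lift, h0]
  exact hmain

/-- if `h` is differentiable (at the relevant partial sums, which lie in
`(0,1)` for `θ ∈ Δ°`), then the Jacobian matrix of `L(h)` at any `θ ∈ Δ°` is lower
triangular with `l`-th diagonal entry `h'(θ₁+⋯+θ_l)`; in particular its determinant is
`∏_{l} h'(θ₁+⋯+θ_l)`. -/
theorem lift_jacobian (k : ℕ) (hk : 2 ≤ k) (h h' : ℝ → ℝ)
    (hd : ∀ u ∈ Set.Ioo (0:ℝ) 1, HasDerivAt h (h' u) u)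
    (θ : Fin (k - 1) → ℝ) (hθ : θ ∈ interior (stdSimplex' (k - 1))) :
    HasFDerivAt (lift (k - 1) h)
      (LinearMap.toContinuousLinearMap
        (Matrix.mulVecLin (liftJac (k - 1) h' θ))) θ ∧
    (∀ l m : Fin (k - 1), l < m → liftJac (k - 1) h' θ l m = 0) ∧
    (∀ l : Fin (k - 1), liftJac (k - 1) h' θ l l = h' (∑ i ∈ Finset.Iic l, θ i)) ∧
    (liftJac (k - 1) h' θ).det = ∏ l : Fin (k - 1), h' (∑ i ∈ Finset.Iic l, θ i) := by
  obtain ⟨hpos, hsum⟩ := interior_facts hθ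
  have hIic : ∀ l : Fin (k - 1), (∑ i ∈ Finset.Iic l, θ i) ∈ Set.Ioo (0:ℝ) 1 := by
    intro l
    refine ⟨Finset.sum_pos (fun i _ => hpos i) ⟨l, Finset.mem_Iic.mpr le_rfl⟩, ?_⟩
    exact lt_of_le_of_lt (Finset.sum_le_sum_of_subset_of_nonneg (Finset.subset_univ _)
      (fun i _ _ => (hpos i).le)) hsum
  have hIio : ∀ l : Fin (k - 1), l.1 ≠ 0 →
      (∑ i ∈ Finset.Iio l, θ i) ∈ Set.Ioo (0:ℝ) 1 := by
    intro l h0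
    refine ⟨Finset.sum_pos (fun i _ => hpos i)
      ⟨⟨0, lt_of_le_of_lt (Nat.zero_le _) l.isLt⟩,
        Finset.mem_Iio.mpr (by simp [Fin.lt_def, Nat.pos_of_ne_zero h0])⟩, ?_⟩
    exact lt_of_le_of_lt (Finset.sum_le_sum_of_subset_of_nonneg (Finset.subset_univ _)
      (fun i _ _ => (hpos i).le)) hsum
  have htri : ∀ l m : Fin (k - 1), l < m → liftJac (k - 1) h' θ l m = 0 := by
    intro l m hlm
    simp [liftJac, not_le.mpr hlm, asymm hlm]
  refine ⟨main_deriv h h' hd θ hIic hIio, htri, fun l => by simp [liftJac], ?_⟩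
  rw [Matrix.det_of_lowerTriangular _ (fun i j hij => htri i j (OrderDual.toDual_lt_toDual.mp hij))]
  exact Finset.prod_congr rfl fun l _ => by simp [liftJac]
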